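/- Every connected chain graph G with minimum degree at least 3 satisfies rx₃(G) ≤ 6. -/

import Mathlib

open SimpleGraph

/-- `c` is a `k`-rainbow coloring of `G`: every set of `k` vertices is contained in some
subtree of `G` whose edges receive pairwise distinct colors. -/
def SimpleGraph.IsKRainbowColoring {V : Type*} (G : SimpleGraph V) {t : ℕ}
    (c : Sym2 V → Fin t) (k : ℕ) : Prop :=
  ∀ S : Finset V, S.card = k →
    ∃ T : G.Subgraph, T.coe.IsTree ∧ ↑S ⊆ T.verts ∧ Set.InjOn c T.edgeSet

/-- The `k`-rainbow index of `G`: the least number of colors in a `k`-rainbow coloring. -/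
noncomputable def SimpleGraph.rx {V : Type*} (G : SimpleGraph V) (k : ℕ) : ℕ :=
  sInf {t | ∃ c : Sym2 V → Fin t, G.IsKRainbowColoring c k}

private lemma isTree_of_parent {W : Type*} {H : SimpleGraph W} (r : W) (par : W → W)
    (rank : W → ℕ)
    (hadj : ∀ v, v ≠ r → H.Adj v (par v))
    (hrank : ∀ v, v ≠ r → rank (par v) < rank v)
    (hpar : ∀ u v, H.Adj u v → (v ≠ r ∧ u = par v) ∨ (u ≠ r ∧ v = par u)) :
    H.IsTree := by
  classical
  have hreach : ∀ n (v : W), rank v ≤ n → H.Reachable v r := by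
    intro n
    induction n with
    | zero =>
      intro v hv
      by_cases h : v = r
      · subst h; exact Reachable.refl _
      · exact absurd (hrank v h) (by omega)
    | succ n ih =>
      intro v hv
      by_cases h : v = r
      · subst h; exact Reachable.refl _
      · exact ((hadj v h).reachable).trans (ih _ (by have := hrank v h; omega))
  constructor
  · have : Nonempty W := ⟨r⟩
    exact ⟨fun u v => (hreach _ u le_rfl).trans (hreach _ v le_rfl).symm⟩
  · intro v0 c hc
    obtain ⟨u, hu_mem, hu_max⟩ :=
      c.support.toFinset.exists_max_image rank (by simp [c.support_ne_nil, List.toFinset_eq_empty_iff, ← Finset.nonempty_iff_ne_empty.symm, Finset.nonempty_iff_ne_empty])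
    rw [List.mem_toFinset] at hu_mem
    have hu_max' : ∀ w ∈ c.support, rank w ≤ rank u := fun w hw => hu_max w (List.mem_toFinset.2 hw)
    -- rotate the cycle to start at u
    have hc' : (c.rotate u hu_mem).IsCycle := hc.rotate hu_mem
    have hsupp : ∀ w ∈ (c.rotate u hu_mem).support, rank w ≤ rank u := by
      intro w hw
      rcases eq_or_ne w u with rfl | hne
      · exact le_rfl
      · have : w ∈ (c.rotate u hu_mem).support.tail := by
          have := (c.rotate u hu_mem).support_eq_cons
          rw [this] at hw
          rcases List.mem_cons.1 hw with h | h
          · exact absurd h hne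
          · exact h
        have : w ∈ c.support.tail := ((Walk.support_rotate c u hu_mem).mem_iff).1 this
        exact hu_max' w (List.mem_of_mem_tail this)
    set c' : H.Walk u u := c.rotate u hu_mem with hc'def
    -- parent characterization: any neighbor of u on the cycle is par u
    have hparu : ∀ w, H.Adj u w → w ∈ c'.support → w = par u := by
      intro w hw hwmem
      rcases hpar u w hw with ⟨hne, h⟩ | ⟨hne, h⟩
      · exfalso
        have h1 := hrank w hne
        rw [← h] at h1
        have h2 := hsupp w hwmem
        omega
      · exact h
    cases hcc : c' with
    | nil => exact hc'.ne_nil (by rw [← hcc])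
    | @cons _ w _ hadj_uw p =>
      rw [hcc] at hc'
      rw [Walk.cons_isCycle_iff] at hc'
      obtain ⟨hp, hne_edge⟩ := hc'
      have hlen : 3 ≤ (Walk.cons hadj_uw p).length := by
        rw [← hcc]; exact (hc.rotate hu_mem).three_le_length
      have hpnotnil : ¬ p.reverse.Nil := by
        rw [Walk.not_nil_iff_lt_length]
        simp only [Walk.length_reverse]
        simp only [Walk.length_cons] at hlen
        omega
      rw [Walk.not_nil_iff] at hpnotnil
      obtain ⟨x, hadj_ux, q, hq⟩ := hpnotnil
      have hx_edge : s(u, x) ∈ p.edges := by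
        have : s(u, x) ∈ p.reverse.edges := by rw [hq]; simp
        rwa [Walk.edges_reverse, List.mem_reverse] at this
      have hx_supp : x ∈ p.support := Walk.snd_mem_support_of_mem_edges p hx_edge
      have hw_supp : w ∈ (Walk.cons hadj_uw p).support := by simp
      have hxc : x ∈ c'.support := by rw [hcc]; simp [hx_supp]
      have hwc : w ∈ c'.support := by rw [hcc]; exact hw_supp
      have hwp : w = par u := hparu w hadj_uw hwc
      have hxp : x = par u := hparu x hadj_ux hxc
      apply hne_edge
      have hxw : x = w := hxp.trans hwp.symm
      rw [hxw] at hx_edge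
      exact hx_edge

/-- Subgraph built from a vertex set with a parent map. -/
private def parentSubgraph {V : Type*} (G : SimpleGraph V) (s : Set V) (x : V) (p : V → V)
    (hadj : ∀ v ∈ s, v ≠ x → G.Adj v (p v)) (hps : ∀ v ∈ s, v ≠ x → p v ∈ s) :
    G.Subgraph where
  verts := s
  Adj u v := (u ∈ s ∧ u ≠ x ∧ v = p u) ∨ (v ∈ s ∧ v ≠ x ∧ u = p v)
  adj_sub := by
    rintro u v (⟨h1, h2, rfl⟩ | ⟨h1, h2, rfl⟩)
    · exact hadj u h1 h2
    · exact (hadj v h1 h2).symm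
  edge_vert := by
    rintro u v (⟨h1, h2, rfl⟩ | ⟨h1, h2, rfl⟩)
    · exact h1
    · exact hps v h1 h2
  symm := by
    constructor
    rintro u v (h | h)
    · exact Or.inr h
    · exact Or.inl h

private lemma parentSubgraph_verts {V : Type*} (G : SimpleGraph V) (s : Set V) (x : V)
    (p : V → V) (hadj) (hps) : (parentSubgraph G s x p hadj hps).verts = s := rfl

private lemma parentSubgraph_edge {V : Type*} (G : SimpleGraph V) (s : Set V) (x : V)
    (p : V → V) (hadj) (hps) {e : Sym2 V}
    (he : e ∈ (parentSubgraph G s x p hadj hps).edgeSet) :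
    ∃ v ∈ s, v ≠ x ∧ e = s(v, p v) := by
  induction e using Sym2.inductionOn with
  | hf u v =>
    rw [Subgraph.mem_edgeSet] at he
    rcases he with ⟨h1, h2, rfl⟩ | ⟨h1, h2, rfl⟩
    · exact ⟨u, h1, h2, rfl⟩
    · exact ⟨v, h1, h2, Sym2.eq_swap⟩

private lemma parentSubgraph_isTree {V : Type*} (G : SimpleGraph V) (s : Set V) (x : V)
    (p : V → V) (rank : V → ℕ) (hadj) (hps) (hx : x ∈ s)
    (hrank : ∀ v ∈ s, v ≠ x → rank (p v) < rank v) :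
    (parentSubgraph G s x p hadj hps).coe.IsTree := by
  classical
  apply isTree_of_parent (⟨x, hx⟩ : ↥s)
    (par := fun v => if h : (v : V) ≠ x then ⟨p v, hps v v.2 h⟩ else ⟨x, hx⟩)
    (rank := fun v => rank v)
  · intro v hv
    have hvx : (v : V) ≠ x := fun h => hv (Subtype.ext h)
    rw [dif_pos hvx]
    exact Or.inl ⟨v.2, hvx, rfl⟩
  · intro v hv
    have hvx : (v : V) ≠ x := fun h => hv (Subtype.ext h)
    rw [dif_pos hvx]
    exact hrank v v.2 hvx
  · rintro u v (⟨h1, h2, h3⟩ | ⟨h1, h2, h3⟩)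
    · refine Or.inr ⟨fun h => h2 (congrArg Subtype.val h), ?_⟩
      rw [dif_pos h2]
      exact Subtype.ext h3
    · refine Or.inl ⟨fun h => h2 (congrArg Subtype.val h), ?_⟩
      rw [dif_pos h2]
      exact Subtype.ext h3

private lemma exists_dominators {V : Type*} [Fintype V] (G : SimpleGraph V) (A : Set V)
    (hbip : ∀ u v : V, G.Adj u v → (u ∈ A ↔ v ∉ A))
    (hchain : ∀ u ∈ A, ∀ v ∈ A,
      G.neighborSet u ⊆ G.neighborSet v ∨ G.neighborSet v ⊆ G.neighborSet u)
    (hδ : ∀ v : V, 3 ≤ (G.neighborSet v).ncard)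
    (hA : A.Nonempty) :
    ∃ a : Fin 3 → V, Function.Injective a ∧ (∀ i, a i ∈ A) ∧
      ∀ i, ∀ v ∉ A, G.Adj (a i) v := by
  classical
  have hnf : ∀ v : V, 3 ≤ (G.neighborFinset v).card := by
    intro v
    rw [neighborFinset_def, ← Set.ncard_eq_toFinset_card']
    exact hδ v
  have hnbA : ∀ v ∉ A, ∀ u ∈ G.neighborFinset v, u ∈ A := by
    intro v hv u hu
    rw [mem_neighborFinset] at hu
    exact (hbip u v hu.symm).mpr hv
  -- a maximum of any nonempty subset of A under neighborhood inclusion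
  have htop : ∀ s : Finset V, (hs : s.Nonempty) → ↑s ⊆ A →
      ∃ m ∈ s, ∀ u ∈ s, G.neighborSet u ⊆ G.neighborSet m := by
    intro s hs
    induction hs using Finset.Nonempty.cons_induction with
    | singleton a => exact fun _ => ⟨a, Finset.mem_singleton_self a, by
        intro u hu
        rw [Finset.mem_singleton] at hu
        subst hu
        exact subset_rfl⟩
    | cons a s ha hs ih =>
      intro hsub
      have hsub' : ↑s ⊆ A := by
        intro u hu
        exact hsub (by simp [hu])
      obtain ⟨m, hm, hmax⟩ := ih hsub'
      have haA : a ∈ A := hsub (by simp)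
      have hmA : m ∈ A := hsub' hm
      rcases hchain a haA m hmA with h | h
      · refine ⟨m, by simp [hm], ?_⟩
        intro u hu
        rcases Finset.mem_cons.1 hu with rfl | hu
        · exact h
        · exact hmax u hu
      · refine ⟨a, by simp, ?_⟩
        intro u hu
        rcases Finset.mem_cons.1 hu with rfl | hu
        · exact subset_rfl
        · exact (hmax u hu).trans h
  -- a vertex outside A
  obtain ⟨u0, hu0⟩ := hA
  have hu0nb : (G.neighborFinset u0).Nonempty := Finset.card_pos.1 (by have := hnf u0; omega)
  obtain ⟨v0, hv0⟩ := hu0nb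
  have hv0A : v0 ∉ A := by
    rw [mem_neighborFinset] at hv0
    exact (hbip u0 v0 hv0).mp hu0
  -- A contains at least three elements
  set 𝒜 : Finset V := A.toFinset with h𝒜
  have hsub𝒜 : ∀ v ∉ A, G.neighborFinset v ⊆ 𝒜 := by
    intro v hv u hu
    rw [h𝒜, Set.mem_toFinset]
    exact hnbA v hv u hu
  have h𝒜card : 3 ≤ 𝒜.card :=
    le_trans (hnf v0) (Finset.card_le_card (hsub𝒜 v0 hv0A))
  have h𝒜A : ↑𝒜 ⊆ A := by intro u hu; rw [Finset.mem_coe, Set.mem_toFinset] at hu; exact hu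
  -- helper to find a neighbor avoiding a small forbidden set
  have havoid : ∀ v ∉ A, ∀ F : Finset V, F.card < 3 → ∃ u ∈ G.neighborFinset v, u ∉ F := by
    intro v hv F hF
    by_contra h
    push_neg at h
    have : G.neighborFinset v ⊆ F := fun u hu => h u hu
    have := Finset.card_le_card this
    have := hnf v
    omega
  -- first dominator
  obtain ⟨a1, ha1, hmax1⟩ := htop 𝒜 (Finset.card_pos.1 (by omega)) h𝒜A
  have hdom1 : ∀ v ∉ A, G.Adj a1 v := by
    intro v hv
    obtain ⟨u, hu, -⟩ := havoid v hv ∅ (by simp)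
    have : v ∈ G.neighborSet u := by
      rw [mem_neighborFinset] at hu
      exact hu.symm
    exact hmax1 u (hsub𝒜 v hv hu) this
  -- second dominator
  have hs2 : (𝒜.erase a1).Nonempty := by
    rw [← Finset.card_pos, Finset.card_erase_of_mem ha1]; omega
  obtain ⟨a2, ha2, hmax2⟩ := htop (𝒜.erase a1) hs2 (fun u hu => h𝒜A (by
    exact Finset.mem_coe.2 (Finset.mem_of_mem_erase (Finset.mem_coe.1 hu))))
  have ha2ne : a2 ≠ a1 := Finset.ne_of_mem_erase ha2
  have ha2𝒜 : a2 ∈ 𝒜 := Finset.mem_of_mem_erase ha2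
  have hdom2 : ∀ v ∉ A, G.Adj a2 v := by
    intro v hv
    obtain ⟨u, hu, huF⟩ := havoid v hv {a1} (by simp)
    have hune : u ≠ a1 := by simpa using huF
    have : v ∈ G.neighborSet u := by
      rw [mem_neighborFinset] at hu
      exact hu.symm
    exact hmax2 u (Finset.mem_erase.2 ⟨hune, hsub𝒜 v hv hu⟩) this
  -- third dominator
  have hs3 : ((𝒜.erase a1).erase a2).Nonempty := by
    rw [← Finset.card_pos, Finset.card_erase_of_mem ha2, Finset.card_erase_of_mem ha1]; omega
  obtain ⟨a3, ha3, hmax3⟩ := htop ((𝒜.erase a1).erase a2) hs3 (fun u hu => h𝒜A (by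
    exact Finset.mem_coe.2 (Finset.mem_of_mem_erase (Finset.mem_of_mem_erase (Finset.mem_coe.1 hu)))))
  have ha3ne2 : a3 ≠ a2 := Finset.ne_of_mem_erase ha3
  have ha3ne1 : a3 ≠ a1 := Finset.ne_of_mem_erase (Finset.mem_of_mem_erase ha3)
  have ha3𝒜 : a3 ∈ 𝒜 := Finset.mem_of_mem_erase (Finset.mem_of_mem_erase ha3)
  have hdom3 : ∀ v ∉ A, G.Adj a3 v := by
    intro v hv
    obtain ⟨u, hu, huF⟩ := havoid v hv {a1, a2} (by
      apply lt_of_le_of_lt (Finset.card_insert_le a1 {a2})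
      simp)
    have hune1 : u ≠ a1 := by simp at huF; exact huF.1
    have hune2 : u ≠ a2 := by simp at huF; exact huF.2
    have : v ∈ G.neighborSet u := by
      rw [mem_neighborFinset] at hu
      exact hu.symm
    exact hmax3 u (Finset.mem_erase.2 ⟨hune2, Finset.mem_erase.2 ⟨hune1, hsub𝒜 v hv hu⟩⟩) this
  refine ⟨![a1, a2, a3], ?_, ?_, ?_⟩
  · intro i j hij
    fin_cases i <;> fin_cases j <;> simp_all <;>
      first
      | rfl
      | (exact absurd hij (by tauto))
  · intro i
    fin_cases i
    · exact h𝒜A ha1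
    · exact h𝒜A ha2𝒜
    · exact h𝒜A ha3𝒜
  · intro i v hv
    fin_cases i
    · exact hdom1 v hv
    · exact hdom2 v hv
    · exact hdom3 v hv

open Classical in
private noncomputable def idx3 {V : Type*} (a : Fin 3 → V) (v : V) : Option (Fin 3) :=
  if v = a 0 then some 0 else if v = a 1 then some 1 else if v = a 2 then some 2 else none

private def colorg' (x y : Option (Fin 3)) : Fin 6 :=
  match x, y with
  | some i, some j => ⟨(i.1 + j.1) % 3, by omega⟩
  | none, some j => ⟨3 + j.1, by omega⟩
  | some i, none => ⟨3 + i.1, by omega⟩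
  | none, none => 0

open Classical in
private noncomputable def colorFun {V : Type*} (A : Set V) (a b : Fin 3 → V) (u v : V) :
    Fin 6 :=
  if u ∈ A ∧ v ∉ A then colorg' (idx3 a u) (idx3 b v)
  else if v ∈ A ∧ u ∉ A then colorg' (idx3 a v) (idx3 b u)
  else 0

private lemma colorFun_symm {V : Type*} (A : Set V) (a b : Fin 3 → V) (u v : V) :
    colorFun A a b u v = colorFun A a b v u := by
  classical
  unfold colorFun
  by_cases hu : u ∈ A <;> by_cases hv : v ∈ A <;> simp [hu, hv]

private lemma idx3_eq_some {V : Type*} {a : Fin 3 → V} (ha : Function.Injective a)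
    (i : Fin 3) : idx3 a (a i) = some i := by
  have h01 : a 0 ≠ a 1 := fun h => absurd (ha h) (by decide)
  have h02 : a 0 ≠ a 2 := fun h => absurd (ha h) (by decide)
  have h12 : a 1 ≠ a 2 := fun h => absurd (ha h) (by decide)
  fin_cases i <;> simp [idx3, h01, h02, h12, h01.symm, h02.symm, h12.symm]

private lemma idx3_eq_none {V : Type*} {a : Fin 3 → V} {v : V} (h : ∀ i, v ≠ a i) :
    idx3 a v = none := by
  simp [idx3, h 0, h 1, h 2]

section ColorLemmas

variable {V : Type*} {A : Set V} {a b : Fin 3 → V}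

private noncomputable def colorMap (A : Set V) (a b : Fin 3 → V) : Sym2 V → Fin 6 :=
  Sym2.lift ⟨fun u v => colorFun A a b u v, fun u v => colorFun_symm A a b u v⟩

private lemma colorMap_core (ha : Function.Injective a) (hb : Function.Injective b)
    (haA : ∀ i, a i ∈ A) (hbA : ∀ j, b j ∉ A) (i j : Fin 3) :
    colorMap A a b s(a i, b j) = ⟨(i.1 + j.1) % 3, by omega⟩ := by
  simp only [colorMap, Sym2.lift_mk]
  rw [colorFun, if_pos ⟨haA i, hbA j⟩, idx3_eq_some ha, idx3_eq_some hb]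
  rfl

private lemma colorMap_pendA (ha : Function.Injective a) (hb : Function.Injective b)
    (haA : ∀ i, a i ∈ A) (hbA : ∀ j, b j ∉ A) {u : V} (hu : u ∈ A)
    (hnota : ∀ i, u ≠ a i) (j : Fin 3) :
    colorMap A a b s(u, b j) = ⟨3 + j.1, by omega⟩ := by
  simp only [colorMap, Sym2.lift_mk]
  rw [colorFun, if_pos ⟨hu, hbA j⟩, idx3_eq_none hnota, idx3_eq_some hb]
  rfl

private lemma colorMap_pendB (ha : Function.Injective a) (hb : Function.Injective b)
    (haA : ∀ i, a i ∈ A) (hbA : ∀ j, b j ∉ A) {v : V} (hv : v ∉ A)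
    (hnotb : ∀ j, v ≠ b j) (i : Fin 3) :
    colorMap A a b s(a i, v) = ⟨3 + i.1, by omega⟩ := by
  simp only [colorMap, Sym2.lift_mk]
  rw [colorFun, if_pos ⟨haA i, hv⟩, idx3_eq_some ha, idx3_eq_none hnotb]
  rfl

end ColorLemmas

private def zSel (o : Fin 3 → Fin 3 ⊕ Fin 3) : Fin 3 ⊕ Fin 3 :=
  match o 0, o 1, o 2 with
  | .inl _, .inl _, .inl _ => .inr 0
  | .inr j, .inl _, .inl _ => .inr j
  | .inl _, .inr j, .inl _ => .inr j
  | .inl _, .inl _, .inr j => .inr j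
  | .inl i, .inr _, .inr _ => .inl i
  | .inr _, .inl i, .inr _ => .inl i
  | .inr _, .inr _, .inl i => .inl i
  | .inr _, .inr _, .inr _ => .inl 0

private lemma zSel_side (o : Fin 3 → Fin 3 ⊕ Fin 3) (k : Fin 3) :
    o k = zSel o ∨ (∃ i j, o k = .inl i ∧ zSel o = .inr j) ∨
      (∃ i j, o k = .inr j ∧ zSel o = .inl i) := by
  rcases h0 : o 0 with i0 | j0 <;> rcases h1 : o 1 with i1 | j1 <;>
    rcases h2 : o 2 with i2 | j2 <;> fin_cases k <;>
    simp [zSel, h0, h1, h2]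


/-- Every connected chain graph `G` with minimum degree at least 3 satisfies `rx₃(G) ≤ 6`. -/
theorem stmt14 {V : Type*} [Fintype V] (G : SimpleGraph V) (hG : G.Connected)
    (hchain : ∃ A : Set V, (∀ u v : V, G.Adj u v → (u ∈ A ↔ v ∉ A)) ∧
      ∀ u ∈ A, ∀ v ∈ A,
        G.neighborSet u ⊆ G.neighborSet v ∨ G.neighborSet v ⊆ G.neighborSet u)
    (hδ : ∀ v : V, 3 ≤ (G.neighborSet v).ncard) :
    G.rx 3 ≤ 6 := by
  classical
  obtain ⟨A, hbip, hchain⟩ := hchain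
  have hV : Nonempty V := hG.nonempty
  have hnbr : ∀ v : V, ∃ u, G.Adj v u := by
    intro v
    have h3 := hδ v
    rcases Set.eq_empty_or_nonempty (G.neighborSet v) with h | h
    · rw [h] at h3; simp [Set.ncard_empty] at h3
    · obtain ⟨u, hu⟩ := h; exact ⟨u, hu⟩
  have hAne : A.Nonempty := by
    obtain ⟨v⟩ := hV
    by_cases hv : v ∈ A
    · exact ⟨v, hv⟩
    · obtain ⟨u, hu⟩ := hnbr v
      exact ⟨u, (hbip u v hu.symm).mpr hv⟩
  have hAcne : Aᶜ.Nonempty := by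
    obtain ⟨u, hu⟩ := hAne
    obtain ⟨w, hw⟩ := hnbr u
    exact ⟨w, (hbip u w hw).mp hu⟩
  have hbipc : ∀ u v : V, G.Adj u v → (u ∈ Aᶜ ↔ v ∉ Aᶜ) := by
    intro u v huv
    have := hbip u v huv
    simp only [Set.mem_compl_iff]
    tauto
  have hchainc : ∀ u ∈ Aᶜ, ∀ v ∈ Aᶜ,
      G.neighborSet u ⊆ G.neighborSet v ∨ G.neighborSet v ⊆ G.neighborSet u := by
    intro u hu v hv
    by_contra hcon
    push_neg at hcon
    obtain ⟨h1, h2⟩ := hcon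
    rw [Set.not_subset] at h1 h2
    obtain ⟨w, hwu, hwv⟩ := h1
    obtain ⟨w', hw'v, hw'u⟩ := h2
    have hwadj : G.Adj u w := hwu
    have hw'adj : G.Adj v w' := hw'v
    have hwA : w ∈ A := (hbip w u hwadj.symm).mpr hu
    have hw'A : w' ∈ A := (hbip w' v hw'adj.symm).mpr hv
    rcases hchain w hwA w' hw'A with h | h
    · exact hw'u ((h (show u ∈ G.neighborSet w from hwadj.symm)).symm : G.Adj u w')
    · exact hwv ((h (show v ∈ G.neighborSet w' from hw'adj.symm)).symm : G.Adj v w)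
  obtain ⟨a, ha_inj, haA, hadom⟩ := exists_dominators G A hbip hchain hδ hAne
  obtain ⟨b, hb_inj, hbAc, hbdom'⟩ := exists_dominators G Aᶜ hbipc hchainc hδ hAcne
  have hbA : ∀ j, b j ∉ A := fun j => hbAc j
  have hbdom : ∀ j, ∀ v ∈ A, G.Adj (b j) v := by
    intro j v hv
    exact hbdom' j v (by simp [hv])
  -- the coloring has 6 colors
  apply Nat.sInf_le
  refine ⟨colorMap A a b, ?_⟩
  intro S hS
  obtain ⟨x0, y0, z0, hxy, hxz, hyz, rfl⟩ := Finset.card_eq_three.mp hS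
  set s : Fin 3 → V := ![x0, y0, z0] with hsdef
  have hs_inj : Function.Injective s := by
    intro k l h
    fin_cases k <;> fin_cases l <;> simp_all [hsdef] <;> tauto
  set o : Fin 3 → Fin 3 ⊕ Fin 3 := fun k =>
    if h : ∃ i, s k = a i then .inl h.choose
    else if h : ∃ j, s k = b j then .inr h.choose
    else if s k ∈ A then .inr k else .inl k with ho_def
  have ho_spec : ∀ k, (∃ i, o k = .inl i ∧ s k = a i) ∨ (∃ j, o k = .inr j ∧ s k = b j) ∨
      ((∀ i, s k ≠ a i) ∧ (∀ j, s k ≠ b j) ∧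
        ((s k ∈ A ∧ o k = .inr k) ∨ (s k ∉ A ∧ o k = .inl k))) := by
    intro k
    by_cases h1 : ∃ i, s k = a i
    · exact Or.inl ⟨h1.choose, by rw [ho_def]; simp only [dif_pos h1], h1.choose_spec⟩
    · by_cases h2 : ∃ j, s k = b j
      · exact Or.inr (Or.inl ⟨h2.choose, by rw [ho_def]; simp only [dif_neg h1, dif_pos h2],
          h2.choose_spec⟩)
      · refine Or.inr (Or.inr ⟨fun i hi => h1 ⟨i, hi⟩, fun j hj => h2 ⟨j, hj⟩, ?_⟩)
        by_cases h3 : s k ∈ A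
        · exact Or.inl ⟨h3, by rw [ho_def]; simp only [dif_neg h1, dif_neg h2, if_pos h3]⟩
        · exact Or.inr ⟨h3, by rw [ho_def]; simp only [dif_neg h1, dif_neg h2, if_neg h3]⟩
  set t : Fin 3 → V := fun k => Sum.elim a b (o k) with ht_def
  set z : Fin 3 ⊕ Fin 3 := zSel o with hz_def
  set x : V := Sum.elim a b z with hx_def
  have hab_ne : ∀ i j, a i ≠ b j := fun i j h => hbA j (h ▸ haA i)
  have ht_core : ∀ k, (∃ i, o k = .inl i ∧ t k = a i) ∨ (∃ j, o k = .inr j ∧ t k = b j) := by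
    intro k
    rcases hok : o k with i | j
    · exact Or.inl ⟨i, rfl, by rw [ht_def]; simp [hok]⟩
    · exact Or.inr ⟨j, rfl, by rw [ht_def]; simp [hok]⟩
  have hx_core : (∃ i, z = .inl i ∧ x = a i) ∨ (∃ j, z = .inr j ∧ x = b j) := by
    rcases hzz : z with i | j
    · exact Or.inl ⟨i, rfl, by rw [hx_def]; simp [hzz]⟩
    · exact Or.inr ⟨j, rfl, by rw [hx_def]; simp [hzz]⟩
  have hxrange : (∃ i, x = a i) ∨ (∃ j, x = b j) := by
    rcases hx_core with ⟨i, _, h⟩ | ⟨j, _, h⟩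
    exacts [Or.inl ⟨i, h⟩, Or.inr ⟨j, h⟩]
  have htx : ∀ k, t k ≠ x → o k ≠ z := by
    intro k h he
    exact h (by simp only [ht_def, hx_def]; rw [he])
  have ht_eq_s : ∀ k, ¬((∀ i, s k ≠ a i) ∧ (∀ j, s k ≠ b j)) → t k = s k := by
    intro k hk
    rcases ho_spec k with ⟨i, hoi, hsi⟩ | ⟨j, hoj, hsj⟩ | ⟨h1, h2, _⟩
    · rcases ht_core k with ⟨i', hoi', hti'⟩ | ⟨j', hoj', _⟩
      · rw [hoi] at hoi'
        obtain rfl : i = i' := by injection hoi'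
        rw [hti', hsi]
      · rw [hoi] at hoj'; exact absurd hoj' (by simp)
    · rcases ht_core k with ⟨i', hoi', _⟩ | ⟨j', hoj', htj'⟩
      · rw [hoj] at hoi'; exact absurd hoi' (by simp)
      · rw [hoj] at hoj'
        obtain rfl : j = j' := by injection hoj'
        rw [htj', hsj]
    · exact absurd ⟨h1, h2⟩ hk
  have ht_pend : ∀ k, (∀ i, s k ≠ a i) → (∀ j, s k ≠ b j) →
      (s k ∈ A ∧ t k = b k) ∨ (s k ∉ A ∧ t k = a k) := by
    intro k h1 h2
    rcases ho_spec k with ⟨i, _, hsi⟩ | ⟨j, _, hsj⟩ | ⟨_, _, ⟨hin, hok⟩ | ⟨hout, hok⟩⟩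
    · exact absurd hsi (h1 i)
    · exact absurd hsj (h2 j)
    · exact Or.inl ⟨hin, by rw [ht_def]; simp [hok]⟩
    · exact Or.inr ⟨hout, by rw [ht_def]; simp [hok]⟩
  -- the parent map, rank, vertex set
  set p : V → V := fun v =>
    if h : ∃ k, ((∀ i, s k ≠ a i) ∧ (∀ j, s k ≠ b j)) ∧ v = s k then t h.choose else x
    with hp_def
  set rank : V → ℕ := fun v =>
    if v = x then 0 else if (∃ i, v = a i) ∨ (∃ j, v = b j) then 1 else 2 with hrank_def
  set sset : Set V := {x, t 0, t 1, t 2, s 0, s 1, s 2} with hsset_def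
  have hp_pend : ∀ k, (∀ i, s k ≠ a i) → (∀ j, s k ≠ b j) → p (s k) = t k := by
    intro k h1 h2
    have hex : ∃ k', ((∀ i, s k' ≠ a i) ∧ (∀ j, s k' ≠ b j)) ∧ s k = s k' := ⟨k, ⟨h1, h2⟩, rfl⟩
    simp only [hp_def]
    rw [dif_pos hex]
    exact congrArg t (hs_inj hex.choose_spec.2.symm)
  have hp_core : ∀ v, (∃ i, v = a i) ∨ (∃ j, v = b j) → p v = x := by
    intro v hv
    simp only [hp_def]
    rw [dif_neg]
    rintro ⟨k', ⟨hna, hnb⟩, rfl⟩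
    rcases hv with ⟨i, h⟩ | ⟨j, h⟩
    · exact hna i h
    · exact hnb j h
  -- classification of non-root vertices of sset
  have hclass : ∀ v ∈ sset, v ≠ x →
      (∃ k, ((∀ i, s k ≠ a i) ∧ (∀ j, s k ≠ b j)) ∧ v = s k) ∨ (∃ k, v = t k) := by
    intro v hv hvx
    rw [hsset_def] at hv
    simp only [Set.mem_insert_iff, Set.mem_singleton_iff] at hv
    rcases hv with rfl | rfl | rfl | rfl | rfl | rfl | rfl
    · exact absurd rfl hvx
    · exact Or.inr ⟨0, rfl⟩
    · exact Or.inr ⟨1, rfl⟩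
    · exact Or.inr ⟨2, rfl⟩
    · by_cases hpk : (∀ i, s 0 ≠ a i) ∧ (∀ j, s 0 ≠ b j)
      · exact Or.inl ⟨0, hpk, rfl⟩
      · exact Or.inr ⟨0, (ht_eq_s 0 hpk).symm⟩
    · by_cases hpk : (∀ i, s 1 ≠ a i) ∧ (∀ j, s 1 ≠ b j)
      · exact Or.inl ⟨1, hpk, rfl⟩
      · exact Or.inr ⟨1, (ht_eq_s 1 hpk).symm⟩
    · by_cases hpk : (∀ i, s 2 ≠ a i) ∧ (∀ j, s 2 ≠ b j)
      · exact Or.inl ⟨2, hpk, rfl⟩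
      · exact Or.inr ⟨2, (ht_eq_s 2 hpk).symm⟩
  -- opposite side of a non-root core vertex, and its adjacency to x
  have hcore_side : ∀ k, t k ≠ x →
      (∃ i jz, o k = .inl i ∧ z = .inr jz ∧ t k = a i ∧ x = b jz) ∨
      (∃ j iz, o k = .inr j ∧ z = .inl iz ∧ t k = b j ∧ x = a iz) := by
    intro k hk
    have hozne := htx k hk
    rcases zSel_side o k with h | ⟨i, j, h1, h2⟩ | ⟨i, j, h1, h2⟩
    · rw [hz_def] at hozne; exact absurd h hozne
    · refine Or.inl ⟨i, j, h1, by rw [hz_def]; exact h2, ?_, ?_⟩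
      · rw [ht_def]; simp [h1]
      · rw [hx_def, hz_def, h2]; rfl
    · refine Or.inr ⟨j, i, h1, by rw [hz_def]; exact h2, ?_, ?_⟩
      · rw [ht_def]; simp [h1]
      · rw [hx_def, hz_def, h2]; rfl
  -- hypotheses for the parent subgraph
  have hadjP : ∀ v ∈ sset, v ≠ x → G.Adj v (p v) := by
    intro v hv hvx
    rcases hclass v hv hvx with ⟨k, ⟨h1, h2⟩, rfl⟩ | ⟨k, rfl⟩
    · rw [hp_pend k h1 h2]
      rcases ht_pend k h1 h2 with ⟨hin, ht⟩ | ⟨hout, ht⟩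
      · rw [ht]; exact (hbdom k _ hin).symm
      · rw [ht]; exact (hadom k _ hout).symm
    · have hpv : p (t k) = x := by
        apply hp_core
        rcases ht_core k with ⟨i, _, h⟩ | ⟨j, _, h⟩
        exacts [Or.inl ⟨i, h⟩, Or.inr ⟨j, h⟩]
      rw [hpv]
      rcases hcore_side k hvx with ⟨i, jz, _, _, ht, hx⟩ | ⟨j, iz, _, _, ht, hx⟩
      · rw [ht, hx]; exact hadom i _ (hbA jz)
      · rw [ht, hx]; exact hbdom j _ (haA iz)
  have hpsP : ∀ v ∈ sset, v ≠ x → p v ∈ sset := by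
    intro v hv hvx
    rcases hclass v hv hvx with ⟨k, ⟨h1, h2⟩, rfl⟩ | ⟨k, rfl⟩
    · rw [hp_pend k h1 h2, hsset_def]
      fin_cases k <;> simp
    · have hpv : p (t k) = x := by
        apply hp_core
        rcases ht_core k with ⟨i, _, h⟩ | ⟨j, _, h⟩
        exacts [Or.inl ⟨i, h⟩, Or.inr ⟨j, h⟩]
      rw [hpv, hsset_def]
      simp
  have hrankP : ∀ v ∈ sset, v ≠ x → rank (p v) < rank v := by
    intro v hv hvx
    rcases hclass v hv hvx with ⟨k, ⟨h1, h2⟩, rfl⟩ | ⟨k, rfl⟩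
    · have hsknx : s k ≠ x := by
        rcases hxrange with ⟨i, h⟩ | ⟨j, h⟩
        · rw [h]; exact h1 i
        · rw [h]; exact h2 j
      have hrv : rank (s k) = 2 := by
        rw [hrank_def]
        simp only [if_neg hsknx]
        rw [if_neg]
        rintro (⟨i, h⟩ | ⟨j, h⟩)
        · exact h1 i h
        · exact h2 j h
      have hrp : rank (p (s k)) ≤ 1 := by
        rw [hp_pend k h1 h2, hrank_def]
        by_cases h : t k = x
        · simp [h]
        · simp only [if_neg h]
          rw [if_pos]
          · rcases ht_core k with ⟨i, _, hh⟩ | ⟨j, _, hh⟩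
            exacts [Or.inl ⟨i, hh⟩, Or.inr ⟨j, hh⟩]
      omega
    · have hpv : p (t k) = x := by
        apply hp_core
        rcases ht_core k with ⟨i, _, h⟩ | ⟨j, _, h⟩
        exacts [Or.inl ⟨i, h⟩, Or.inr ⟨j, h⟩]
      rw [hpv]
      have h0 : rank x = 0 := by rw [hrank_def]; simp
      have h1 : rank (t k) = 1 := by
        rw [hrank_def]
        simp only [if_neg hvx]
        rw [if_pos]
        · rcases ht_core k with ⟨i, _, hh⟩ | ⟨j, _, hh⟩
          exacts [Or.inl ⟨i, hh⟩, Or.inr ⟨j, hh⟩]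
      omega
  have hxmem : x ∈ sset := by rw [hsset_def]; simp
  refine ⟨parentSubgraph G sset x p hadjP hpsP,
    parentSubgraph_isTree G sset x p rank hadjP hpsP hxmem hrankP, ?_, ?_⟩
  · -- S ⊆ verts
    intro v hv
    simp only [Finset.coe_insert, Set.mem_insert_iff, Finset.coe_singleton,
      Set.mem_singleton_iff] at hv
    show v ∈ sset
    rw [hsset_def]
    have h0 : s 0 = x0 := rfl
    have h1 : s 1 = y0 := rfl
    have h2 : s 2 = z0 := rfl
    rcases hv with h | h | h
    · rw [h, ← h0]; simp
    · rw [h, ← h1]; simp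
    · rw [h, ← h2]; simp
  · -- injectivity of the coloring on the edge set
    intro e1 he1 e2 he2 hce
    obtain ⟨v, hv, hvx, rfl⟩ := parentSubgraph_edge G sset x p hadjP hpsP he1
    obtain ⟨w, hw, hwx, rfl⟩ := parentSubgraph_edge G sset x p hadjP hpsP he2
    -- color of each tree edge
    have hcol : ∀ u ∈ sset, u ≠ x →
        (∃ k : Fin 3, u = s k ∧ (colorMap A a b s(u, p u)).1 = 3 + k.1) ∨
        (∃ i jz : Fin 3, u = a i ∧ p u = x ∧ z = .inr jz ∧
          (colorMap A a b s(u, p u)).1 = (i.1 + jz.1) % 3) ∨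
        (∃ j iz : Fin 3, u = b j ∧ p u = x ∧ z = .inl iz ∧
          (colorMap A a b s(u, p u)).1 = (iz.1 + j.1) % 3) := by
      intro u hu hux
      rcases hclass u hu hux with ⟨k, ⟨h1, h2⟩, rfl⟩ | ⟨k, rfl⟩
      · left
        refine ⟨k, rfl, ?_⟩
        rw [hp_pend k h1 h2]
        rcases ht_pend k h1 h2 with ⟨hin, ht⟩ | ⟨hout, ht⟩
        · rw [ht, colorMap_pendA ha_inj hb_inj haA hbA hin h1 k]
        · rw [show s(s k, t k) = s(t k, s k) from Sym2.eq_swap, ht,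
            colorMap_pendB ha_inj hb_inj haA hbA hout h2 k]
      · have hpv : p (t k) = x := by
          apply hp_core
          rcases ht_core k with ⟨i, _, h⟩ | ⟨j, _, h⟩
          exacts [Or.inl ⟨i, h⟩, Or.inr ⟨j, h⟩]
        rcases hcore_side k hux with ⟨i, jz, _, hzz, ht, hx⟩ | ⟨j, iz, _, hzz, ht, hx⟩
        · right; left
          refine ⟨i, jz, ht, hpv, hzz, ?_⟩
          rw [hpv, ht, hx, colorMap_core ha_inj hb_inj haA hbA i jz]
        · right; right
          refine ⟨j, iz, ht, hpv, hzz, ?_⟩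
          rw [hpv, ht, hx, show s(b j, a iz) = s(a iz, b j) from Sym2.eq_swap,
            colorMap_core ha_inj hb_inj haA hbA iz j]
    have hfv := hcol v hv hvx
    have hfw := hcol w hw hwx
    have hce' : (colorMap A a b s(v, p v)).1 = (colorMap A a b s(w, p w)).1 := by rw [hce]
    have hvw : v = w := by
      rcases hfv with ⟨k, hk, hc⟩ | ⟨i, jz, hva, _, hzz, hc⟩ | ⟨j, iz, hvb, _, hzz, hc⟩ <;>
        rcases hfw with ⟨k', hk', hc'⟩ | ⟨i', jz', hwa, _, hzz', hc'⟩ |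
          ⟨j', iz', hwb, _, hzz', hc'⟩
      · -- both pendant
        have : k = k' := by
          have hk1 : k.1 = k'.1 := by omega
          exact Fin.ext hk1
        rw [hk, hk', this]
      · exfalso; omega
      · exfalso; omega
      · exfalso; omega
      · -- both a-side leaves
        have hjz : jz = jz' := by
          rw [hzz] at hzz'; injection hzz'
        have : i = i' := by
          apply Fin.ext
          have h3 : i.1 < 3 := i.2
          have h3' : i'.1 < 3 := i'.2
          have hj3 : jz.1 < 3 := jz.2
          rw [← hjz] at hc'
          omega
        rw [hva, hwa, this]
      · exfalso
        rw [hzz] at hzz'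
        simp at hzz'
      · exfalso; omega
      · exfalso
        rw [hzz] at hzz'
        simp at hzz'
      · -- both b-side leaves
        have hiz : iz = iz' := by
          rw [hzz] at hzz'; injection hzz'
        have : j = j' := by
          apply Fin.ext
          have h3 : j.1 < 3 := j.2
          have h3' : j'.1 < 3 := j'.2
          have hi3 : iz.1 < 3 := iz.2
          rw [← hiz] at hc'
          omega
        rw [hvb, hwb, this]
    rw [hvw]
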